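/- arXiv:2205.11971 — 2 statements merged into one kernel-verified Lean document; each statement's English description precedes it below -/
import Mathlib

section
/- In the complex Clifford algebra Cl_n with orthonormal generators α₁,…,αₙ (αᵢ² = 1, αᵢαⱼ = −αⱼαᵢ for i≠j), the elements eᵢ = (1 + αᵢα_{i+1})/√2 for i = 1,…,n−1 satisfy the braid relations: eᵢe_{i+1}eᵢ = e_{i+1}eᵢe_{i+1}, and eᵢeⱼ = eⱼeᵢ when |i−j| > 1. -/
lemma core_braid {A : Type*} [Ring A] (a b c : A)
    (ha : a * a = 1) (hb : b * b = 1) (hc : c * c = 1)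
    (hab : a * b = -(b * a)) (hac : a * c = -(c * a)) (hbc : b * c = -(c * b)) :
    (1 + a * b) * (1 + b * c) * (1 + a * b) = (1 + b * c) * (1 + a * b) * (1 + b * c) := by
  have hba : b * a = -(a * b) := by rw [hab, neg_neg]
  have hca : c * a = -(a * c) := by rw [hac, neg_neg]
  have hcb : c * b = -(b * c) := by rw [hbc, neg_neg]
  have sba : ∀ x : A, b * (a * x) = -(a * (b * x)) := fun x => by
    rw [← mul_assoc, hba, neg_mul, mul_assoc]
  have sca : ∀ x : A, c * (a * x) = -(a * (c * x)) := fun x => by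
    rw [← mul_assoc, hca, neg_mul, mul_assoc]
  have scb : ∀ x : A, c * (b * x) = -(b * (c * x)) := fun x => by
    rw [← mul_assoc, hcb, neg_mul, mul_assoc]
  have saa : ∀ x : A, a * (a * x) = x := fun x => by rw [← mul_assoc, ha, one_mul]
  have sbb : ∀ x : A, b * (b * x) = x := fun x => by rw [← mul_assoc, hb, one_mul]
  have scc : ∀ x : A, c * (c * x) = x := fun x => by rw [← mul_assoc, hc, one_mul]
  simp only [mul_add, add_mul, mul_one, one_mul, mul_assoc, mul_neg, neg_mul, neg_neg,
    sba, sca, scb, saa, sbb, scc, hba, hca, hcb, ha, hb, hc]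
  abel

lemma core_comm {A : Type*} [Ring A] (a b c d : A)
    (hca : c * a = -(a * c)) (hcb : c * b = -(b * c))
    (hda : d * a = -(a * d)) (hdb : d * b = -(b * d)) :
    (1 + a * b) * (1 + c * d) = (1 + c * d) * (1 + a * b) := by
  have sca : ∀ x : A, c * (a * x) = -(a * (c * x)) := fun x => by
    rw [← mul_assoc, hca, neg_mul, mul_assoc]
  have scb : ∀ x : A, c * (b * x) = -(b * (c * x)) := fun x => by
    rw [← mul_assoc, hcb, neg_mul, mul_assoc]
  have sda : ∀ x : A, d * (a * x) = -(a * (d * x)) := fun x => by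
    rw [← mul_assoc, hda, neg_mul, mul_assoc]
  have sdb : ∀ x : A, d * (b * x) = -(b * (d * x)) := fun x => by
    rw [← mul_assoc, hdb, neg_mul, mul_assoc]
  simp only [mul_add, add_mul, mul_one, one_mul, mul_assoc, mul_neg, neg_mul, neg_neg,
    sca, scb, sda, sdb, hca, hcb, hda, hdb]
  abel

/-- The Clifford Braiding Theorem of Kauffman–Lomonaco: in the complex Clifford algebra
`Cl_n` with orthonormal generators `α₁,…,αₙ` (`αᵢ² = 1`, `αᵢαⱼ = −αⱼαᵢ` for `i ≠ j`),
the elements `eᵢ = (1 + αᵢα_{i+1})/√2` satisfy the braid relations. -/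
theorem stmt5 {A : Type*} [Ring A] [Algebra ℂ A] {n : ℕ} (α : Fin n → A)
    (hsq : ∀ i, α i * α i = 1)
    (hanti : ∀ i j, i ≠ j → α i * α j = -(α j * α i)) :
    (∀ (i : ℕ) (h : i + 2 < n),
      ((Real.sqrt 2 : ℂ)⁻¹ • (1 + α ⟨i, by omega⟩ * α ⟨i + 1, by omega⟩)) *
          ((Real.sqrt 2 : ℂ)⁻¹ • (1 + α ⟨i + 1, by omega⟩ * α ⟨i + 2, h⟩)) *
          ((Real.sqrt 2 : ℂ)⁻¹ • (1 + α ⟨i, by omega⟩ * α ⟨i + 1, by omega⟩)) =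
        ((Real.sqrt 2 : ℂ)⁻¹ • (1 + α ⟨i + 1, by omega⟩ * α ⟨i + 2, h⟩)) *
          ((Real.sqrt 2 : ℂ)⁻¹ • (1 + α ⟨i, by omega⟩ * α ⟨i + 1, by omega⟩)) *
          ((Real.sqrt 2 : ℂ)⁻¹ • (1 + α ⟨i + 1, by omega⟩ * α ⟨i + 2, h⟩))) ∧
    (∀ (i j : ℕ) (hij : i + 1 < j) (h : j + 1 < n),
      ((Real.sqrt 2 : ℂ)⁻¹ • (1 + α ⟨i, by omega⟩ * α ⟨i + 1, by omega⟩)) *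
          ((Real.sqrt 2 : ℂ)⁻¹ • (1 + α ⟨j, by omega⟩ * α ⟨j + 1, h⟩)) =
        ((Real.sqrt 2 : ℂ)⁻¹ • (1 + α ⟨j, by omega⟩ * α ⟨j + 1, h⟩)) *
          ((Real.sqrt 2 : ℂ)⁻¹ • (1 + α ⟨i, by omega⟩ * α ⟨i + 1, by omega⟩))) := by
  constructor
  · intro i h
    simp only [smul_mul_assoc, mul_smul_comm]
    rw [core_braid _ _ _ (hsq _) (hsq _) (hsq _)
      (hanti _ _ (Fin.ne_of_val_ne (by simp only [Fin.val_mk]; omega)))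
      (hanti _ _ (Fin.ne_of_val_ne (by simp only [Fin.val_mk]; omega)))
      (hanti _ _ (Fin.ne_of_val_ne (by simp only [Fin.val_mk]; omega)))]
  · intro i j hij h
    simp only [smul_mul_assoc, mul_smul_comm]
    rw [core_comm _ _ _ _
      (hanti _ _ (Fin.ne_of_val_ne (by simp only [Fin.val_mk]; omega)))
      (hanti _ _ (Fin.ne_of_val_ne (by simp only [Fin.val_mk]; omega)))
      (hanti _ _ (Fin.ne_of_val_ne (by simp only [Fin.val_mk]; omega)))
      (hanti _ _ (Fin.ne_of_val_ne (by simp only [Fin.val_mk]; omega)))]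
end

section
/- If m/p is even, then μ(G(m,p,n)) = G(m,p,n) as subgroups of GL_n(ℂ). -/
/-- The permutation matrix of `w`: its `l`-th column is the basis vector `x_{w(l)}`. -/
noncomputable def permM {n : ℕ} (w : Equiv.Perm (Fin n)) : Matrix (Fin n) (Fin n) ℂ :=
  Matrix.of fun k l => if w l = k then (1 : ℂ) else 0

/-- The complex reflection group `G(m,p,n) = Sₙ ⋉ T(m,p,n)` as a set of matrices. -/
noncomputable def Gmpn (m p n : ℕ) : Set (Matrix (Fin n) (Fin n) ℂ) :=
  {M | ∃ (w : Equiv.Perm (Fin n)) (d : Fin n → ℂ),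
    (∀ i, d i ^ m = 1) ∧ (∏ i, d i) ^ (m / p) = 1 ∧ M = permM w * Matrix.diagonal d}

/-- The mystic reflection group `μ(G(m,p,n))` as a set of matrices. -/
noncomputable def muG (m p n : ℕ) : Set (Matrix (Fin n) (Fin n) ℂ) :=
  {M | ∃ (w : Equiv.Perm (Fin n)) (d : Fin n → ℂ),
    (∀ i, d i ^ m = 1) ∧ M = permM w * Matrix.diagonal d ∧ M.det ^ (m / p) = 1}

lemma permM_eq {n : ℕ} (w : Equiv.Perm (Fin n)) :
    permM w = (w⁻¹ : Equiv.Perm (Fin n)).permMatrix ℂ := by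
  ext k l
  simp only [permM, Matrix.of_apply, Equiv.Perm.permMatrix, PEquiv.toMatrix,
    Equiv.toPEquiv_apply, Option.mem_def, Option.some.injEq]
  congr 1
  simp [eq_comm, Equiv.eq_symm_apply, Equiv.Perm.inv_def]

lemma det_permM {n : ℕ} (w : Equiv.Perm (Fin n)) :
    (permM w).det = (Equiv.Perm.sign w : ℂ) := by
  rw [permM_eq, Matrix.det_permutation, map_inv]
  simp

lemma det_pow_eq {m p n : ℕ} (heven : Even (m / p)) (w : Equiv.Perm (Fin n))
    (d : Fin n → ℂ) :
    (permM w * Matrix.diagonal d).det ^ (m / p) = (∏ i, d i) ^ (m / p) := by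
  rw [Matrix.det_mul, det_permM, Matrix.det_diagonal, mul_pow]
  have : ((Equiv.Perm.sign w : ℤ) : ℂ) ^ (m / p) = 1 := by
    rcases Int.units_eq_one_or (Equiv.Perm.sign w) with h | h <;> rw [h] <;>
      simp [heven.neg_one_pow]
  rw [this, one_mul]

/-- If `m/p` is even then `μ(G(m,p,n)) = G(m,p,n)` as subgroups of `GLₙ(ℂ)`. -/
theorem stmt12 (m p n : ℕ) (hm : 0 < m) (hp : 0 < p) (hpm : p ∣ m)
    (heven : Even (m / p)) :
    muG m p n = Gmpn m p n := by
  ext M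
  constructor
  · rintro ⟨w, d, hd, rfl, hdet⟩
    exact ⟨w, d, hd, by rw [← det_pow_eq heven w d]; exact hdet, rfl⟩
  · rintro ⟨w, d, hd, hprod, rfl⟩
    exact ⟨w, d, hd, rfl, by rw [det_pow_eq heven w d]; exact hprod⟩
end
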